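/- Define E_{n,k} and O_{n,k} (polynomials in X and Y) by the recursions E_{n,k} = O_{n-1,k-1} + (n-1+X) E_{n-1,k} and O_{n,k} = E_{n,k} + (n-1+Y) O_{n-1,k}, with E_{n,k} = O_{n,k} = 0 if n < k, k < 0, or n < 0, and E_{n,n} = O_{n,n} = 1. Then E_{n,k} equals the sum over all k-marked permutations pi of {1,...,n} of X^{RLmin'(pi)} Y^{LRmin'(pi)}. -/

import Mathlib

open Finset

/-- `markedOK σ S k` says that `(σ, S)` is a `k`-marked permutation of `[n]`: the positions
in `S` (of size `k`) carry values forming an increasing subsequence of the word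
`σ 0, σ 1, …, σ (n-1)`. -/
def markedOK {n : ℕ} (σ : Equiv.Perm (Fin n)) (S : Finset (Fin n)) (k : ℕ) : Prop :=
  S.card = k ∧ ∀ i ∈ S, ∀ j ∈ S, i < j → σ i < σ j

/-- `RLmin'`: the number of unmarked positions `p` whose entry is a right-to-left minimum of
its block (the maximal run of unmarked positions containing `p`) and whose value lies between
the neighboring marked values (`a_i ≤ σ p ≤ a_{i+1}`, with `a_0 = 0`, `a_{k+1} = ∞`). -/
def rlmin' {n : ℕ} (σ : Equiv.Perm (Fin n)) (S : Finset (Fin n)) : ℕ :=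
  (univ.filter fun p => p ∉ S ∧ (∀ s ∈ S, s < p → σ s < σ p) ∧ (∀ s ∈ S, p < s → σ p < σ s) ∧
    ∀ q, p < q → q ∉ S → (∀ r, p < r → r < q → r ∉ S) → σ p < σ q).card

/-- `LRmin'`: the number of left-to-right minima of the whole word which are unmarked and
occur strictly after the first marked position (i.e. not left-to-right minima of the initial
block `w₀` and not marked). -/
def lrmin' {n : ℕ} (σ : Equiv.Perm (Fin n)) (S : Finset (Fin n)) : ℕ :=
  (univ.filter fun p => p ∉ S ∧ (∃ s ∈ S, s < p) ∧ ∀ q, q < p → σ p < σ q).card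

namespace Stmt11Aux

open Equiv Fin

variable {m : ℕ}

def mk (j v : Fin (m + 1)) (π : Equiv.Perm (Fin m)) : Equiv.Perm (Fin (m + 1)) :=
  ((finSuccEquiv' j).trans π.optionCongr).trans (finSuccEquiv' v).symm

@[simp] lemma mk_at (j v : Fin (m + 1)) (π : Equiv.Perm (Fin m)) : mk j v π j = v := by
  simp [mk, finSuccEquiv'_at]

@[simp] lemma mk_succAbove (j v : Fin (m + 1)) (π : Equiv.Perm (Fin m)) (i : Fin m) :
    mk j v π (j.succAbove i) = v.succAbove (π i) := by
  simp [mk, finSuccEquiv'_succAbove]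

def unmk (j : Fin (m + 1)) (τ : Equiv.Perm (Fin (m + 1))) : Equiv.Perm (Fin m) :=
  Equiv.removeNone (((finSuccEquiv' j).symm.trans τ).trans (finSuccEquiv' (τ j)))

@[simp] lemma unmk_mk (j v : Fin (m + 1)) (π : Equiv.Perm (Fin m)) : unmk j (mk j v π) = π := by
  have : (((finSuccEquiv' j).symm.trans (mk j v π)).trans (finSuccEquiv' ((mk j v π) j)))
      = π.optionCongr := by
    ext x
    simp [mk, Equiv.trans_apply]
  rw [unmk, this, Equiv.removeNone_optionCongr]

lemma unmk_spec (j : Fin (m + 1)) (τ : Equiv.Perm (Fin (m + 1))) (i : Fin m) :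
    τ (j.succAbove i) = (τ j).succAbove (unmk j τ i) := by
  have hne : τ (j.succAbove i) ≠ τ j := fun h => succAbove_ne j i (τ.injective h)
  obtain ⟨w, hw⟩ := Fin.exists_succAbove_eq hne
  have he : (((finSuccEquiv' j).symm.trans τ).trans (finSuccEquiv' (τ j))) (some i) = some w := by
    simp only [Equiv.trans_apply, finSuccEquiv'_symm_some, ← hw, finSuccEquiv'_succAbove]
  have h2 := Equiv.removeNone_some _ ⟨w, he⟩
  rw [he] at h2
  rw [← hw, unmk]
  exact congrArg _ (Option.some_injective _ h2.symm)

lemma mk_unmk (j : Fin (m + 1)) (τ : Equiv.Perm (Fin (m + 1))) : mk j (τ j) (unmk j τ) = τ := by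
  ext p
  rcases eq_or_ne p j with rfl | hp
  · simp
  · obtain ⟨i, rfl⟩ := Fin.exists_succAbove_eq hp
    rw [mk_succAbove, ← unmk_spec]


/-- The "right-to-left minimum" predicate underlying `rlmin'`. -/
def RLP {n : ℕ} (σ : Equiv.Perm (Fin n)) (S : Finset (Fin n)) (p : Fin n) : Prop :=
  p ∉ S ∧ (∀ s ∈ S, s < p → σ s < σ p) ∧ (∀ s ∈ S, p < s → σ p < σ s) ∧
    ∀ q, p < q → q ∉ S → (∀ r, p < r → r < q → r ∉ S) → σ p < σ q

/-- The "left-to-right minimum" predicate underlying `lrmin'`. -/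
def LRP {n : ℕ} (σ : Equiv.Perm (Fin n)) (S : Finset (Fin n)) (p : Fin n) : Prop :=
  p ∉ S ∧ (∃ s ∈ S, s < p) ∧ ∀ q, q < p → σ p < σ q

open Classical in
lemma rlmin'_eq {n : ℕ} (σ : Equiv.Perm (Fin n)) (S : Finset (Fin n)) :
    rlmin' σ S = (univ.filter (RLP σ S)).card := by
  unfold rlmin' RLP; congr!

open Classical in
lemma lrmin'_eq {n : ℕ} (σ : Equiv.Perm (Fin n)) (S : Finset (Fin n)) :
    lrmin' σ S = (univ.filter (LRP σ S)).card := by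
  unfold lrmin' LRP; congr!

open Classical in
lemma card_filter_split (j : Fin (m + 1)) (P : Fin (m + 1) → Prop) :
    (univ.filter P).card
      = (univ.filter fun i => P (j.succAbove i)).card + (if P j then 1 else 0) := by
  rw [Finset.card_filter, Finset.card_filter, Fin.sum_univ_succAbove _ j, add_comm]

@[simp] lemma succAbove_mem_map {j : Fin (m + 1)} {S : Finset (Fin m)} {q : Fin m} :
    j.succAbove q ∈ S.map j.succAboveEmb ↔ q ∈ S := by
  simp [Finset.mem_map, Fin.succAboveEmb, (Fin.succAbove_right_injective (p := j)).eq_iff]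

@[simp] lemma self_not_mem_map {j : Fin (m + 1)} {S : Finset (Fin m)} :
    j ∉ S.map j.succAboveEmb := by
  simp only [Finset.mem_map, Fin.succAboveEmb]
  rintro ⟨a, -, ha⟩
  exact Fin.succAbove_ne j a ha

section CaseA

variable (j : Fin (m + 1)) (π : Equiv.Perm (Fin m)) (S : Finset (Fin m))

lemma markedOK_A (k : ℕ) (v : Fin (m + 1)) :
    markedOK (mk j v π) (S.map j.succAboveEmb) k ↔ markedOK π S k := by
  unfold markedOK
  rw [Finset.card_map]
  refine and_congr Iff.rfl ?_
  rw [Finset.forall_mem_map]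
  refine forall₂_congr fun a _ => ?_
  rw [Finset.forall_mem_map]
  refine forall₂_congr fun b _ => ?_
  simp [Fin.succAbove_lt_succAbove_iff]

lemma RLP_A_succAbove (q : Fin m) :
    RLP (mk j (Fin.last m) π) (S.map j.succAboveEmb) (j.succAbove q) ↔ RLP π S q := by
  unfold RLP
  constructor
  · rintro ⟨h1, h2, h3, h4⟩
    refine ⟨fun hq => h1 (succAbove_mem_map.2 hq), fun s hs hlt => ?_, fun s hs hlt => ?_,
      fun q' hlt hq' hgap => ?_⟩
    · have := h2 (j.succAbove s) (succAbove_mem_map.2 hs) (Fin.succAbove_lt_succAbove_iff.2 hlt)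
      simpa [Fin.succAbove_lt_succAbove_iff] using this
    · have := h3 (j.succAbove s) (succAbove_mem_map.2 hs) (Fin.succAbove_lt_succAbove_iff.2 hlt)
      simpa [Fin.succAbove_lt_succAbove_iff] using this
    · have := h4 (j.succAbove q') (Fin.succAbove_lt_succAbove_iff.2 hlt)
        (fun h => hq' (succAbove_mem_map.1 h)) ?_
      · simpa [Fin.succAbove_lt_succAbove_iff] using this
      intro r hr1 hr2 hrS
      rcases eq_or_ne r j with rfl | hrj
      · exact self_not_mem_map hrS
      · obtain ⟨r', rfl⟩ := Fin.exists_succAbove_eq hrj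
        exact hgap r' (Fin.succAbove_lt_succAbove_iff.1 hr1)
          (Fin.succAbove_lt_succAbove_iff.1 hr2) (succAbove_mem_map.1 hrS)
  · rintro ⟨h1, h2, h3, h4⟩
    refine ⟨fun hq => h1 (succAbove_mem_map.1 hq), ?_, ?_, ?_⟩
    · intro s hs hlt
      obtain ⟨s', hs', rfl⟩ := Finset.mem_map.1 hs
      simp only [Fin.succAboveEmb, Function.Embedding.coeFn_mk] at *
      have := h2 s' hs' (Fin.succAbove_lt_succAbove_iff.1 hlt)
      simpa [Fin.succAbove_lt_succAbove_iff] using this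
    · intro s hs hlt
      obtain ⟨s', hs', rfl⟩ := Finset.mem_map.1 hs
      simp only [Fin.succAboveEmb, Function.Embedding.coeFn_mk] at *
      have := h3 s' hs' (Fin.succAbove_lt_succAbove_iff.1 hlt)
      simpa [Fin.succAbove_lt_succAbove_iff] using this
    · intro q' hlt hq' hgap
      rcases eq_or_ne q' j with rfl | hq'j
      · -- target value is `last`, and `σ (succAbove q) < last`
        simp only [mk_succAbove, mk_at]
        exact Fin.lt_last_iff_ne_last.2 (Fin.succAbove_ne _ _)
      · obtain ⟨q'', rfl⟩ := Fin.exists_succAbove_eq hq'j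
        have := h4 q'' (Fin.succAbove_lt_succAbove_iff.1 hlt)
          (fun h => hq' (succAbove_mem_map.2 h)) ?_
        · simpa [Fin.succAbove_lt_succAbove_iff] using this
        intro r hr1 hr2
        exact fun hrS => hgap (j.succAbove r) (Fin.succAbove_lt_succAbove_iff.2 hr1)
          (Fin.succAbove_lt_succAbove_iff.2 hr2) (succAbove_mem_map.2 hrS)

lemma RLP_A_at :
    RLP (mk j (Fin.last m) π) (S.map j.succAboveEmb) j ↔ j = Fin.last m := by
  constructor
  · rintro ⟨h1, h2, h3, h4⟩
    by_contra hne
    set q0 : Fin m := j.castPred hne with hq0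
    have hsa : j.succAbove q0 = q0.succ := Fin.succAbove_castPred_self j hne
    have hjlt : j < j.succAbove q0 := by
      rw [hsa, ← Fin.castSucc_castPred j hne]
      exact Fin.castSucc_lt_succ (i := q0)
    by_cases hq0S : q0 ∈ S
    · have := h3 (j.succAbove q0) (succAbove_mem_map.2 hq0S) hjlt
      simp only [mk_at, mk_succAbove] at this
      exact absurd this (Fin.not_lt.2 (Fin.le_last _))
    · have := h4 (j.succAbove q0) hjlt (fun h => hq0S (succAbove_mem_map.1 h)) ?_
      · simp only [mk_at, mk_succAbove] at this
        exact absurd this (Fin.not_lt.2 (Fin.le_last _))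
      intro r hr1 hr2
      exfalso
      rw [hsa] at hr2
      have h1' : (j : ℕ) < (r : ℕ) := hr1
      have h2' : (r : ℕ) < (q0 : ℕ) + 1 := by simpa [Fin.lt_iff_val_lt_val] using hr2
      have h3' : (q0 : ℕ) = (j : ℕ) := by simp [hq0]
      omega
  · rintro rfl
    refine ⟨self_not_mem_map, ?_, ?_, ?_⟩
    · intro s hs _
      obtain ⟨s', _, rfl⟩ := Finset.mem_map.1 hs
      simp only [Fin.succAboveEmb, Function.Embedding.coeFn_mk, mk_at, mk_succAbove]
      exact Fin.lt_last_iff_ne_last.2 (Fin.succAbove_ne _ _)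
    · intro s _ hlt
      exact absurd hlt (Fin.not_lt.2 (Fin.le_last _))
    · intro q' hlt
      exact absurd hlt (Fin.not_lt.2 (Fin.le_last _))

lemma LRP_A_succAbove (q : Fin m) :
    LRP (mk j (Fin.last m) π) (S.map j.succAboveEmb) (j.succAbove q) ↔ LRP π S q := by
  unfold LRP
  constructor
  · rintro ⟨h1, ⟨s, hs, hslt⟩, h3⟩
    obtain ⟨s', hs', rfl⟩ := Finset.mem_map.1 hs
    simp only [Fin.succAboveEmb, Function.Embedding.coeFn_mk] at hslt
    refine ⟨fun hq => h1 (succAbove_mem_map.2 hq),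
      ⟨s', hs', Fin.succAbove_lt_succAbove_iff.1 hslt⟩, ?_⟩
    intro q' hlt
    have := h3 (j.succAbove q') (Fin.succAbove_lt_succAbove_iff.2 hlt)
    simpa [Fin.succAbove_lt_succAbove_iff] using this
  · rintro ⟨h1, ⟨s, hs, hslt⟩, h3⟩
    refine ⟨fun hq => h1 (succAbove_mem_map.1 hq),
      ⟨j.succAbove s, succAbove_mem_map.2 hs, Fin.succAbove_lt_succAbove_iff.2 hslt⟩, ?_⟩
    intro q' hlt
    rcases eq_or_ne q' j with rfl | hq'j
    · simp only [mk_at, mk_succAbove]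
      exact Fin.lt_last_iff_ne_last.2 (Fin.succAbove_ne _ _)
    · obtain ⟨q'', rfl⟩ := Fin.exists_succAbove_eq hq'j
      have := h3 q'' (Fin.succAbove_lt_succAbove_iff.1 hlt)
      simpa [Fin.succAbove_lt_succAbove_iff] using this

lemma LRP_A_at : ¬ LRP (mk j (Fin.last m) π) (S.map j.succAboveEmb) j := by
  rintro ⟨h1, ⟨s, hs, hslt⟩, h3⟩
  obtain ⟨s', hs', rfl⟩ := Finset.mem_map.1 hs
  simp only [Fin.succAboveEmb, Function.Embedding.coeFn_mk] at hslt
  have := h3 _ hslt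
  simp only [mk_at, mk_succAbove] at this
  exact absurd this (Fin.not_lt.2 (Fin.le_last _))

open Classical in
lemma rlmin'_A :
    rlmin' (mk j (Fin.last m) π) (S.map j.succAboveEmb)
      = rlmin' π S + (if j = Fin.last m then 1 else 0) := by
  rw [rlmin'_eq, rlmin'_eq, card_filter_split j]
  congr 1
  · congr 1
    apply Finset.filter_congr
    intro q _
    simp [RLP_A_succAbove]
  · simp only [RLP_A_at]

open Classical in
lemma lrmin'_A :
    lrmin' (mk j (Fin.last m) π) (S.map j.succAboveEmb) = lrmin' π S := by
  rw [lrmin'_eq, lrmin'_eq, card_filter_split j]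
  rw [if_neg (LRP_A_at j π S), add_zero]
  congr 1
  apply Finset.filter_congr
  intro q _
  simp [LRP_A_succAbove]

end CaseA

section CaseB

variable (π : Equiv.Perm (Fin m)) (S : Finset (Fin m))

/-- The mark set for appending a marked maximum at the end. -/
def Tins (S : Finset (Fin m)) : Finset (Fin (m + 1)) :=
  insert (Fin.last m) (S.map (Fin.last m).succAboveEmb)

@[simp] lemma mk_last_castSucc (v : Fin (m + 1)) (π : Equiv.Perm (Fin m)) (i : Fin m) :
    mk (Fin.last m) v π (Fin.castSucc i) = v.succAbove (π i) := by
  rw [← Fin.succAbove_last_apply, mk_succAbove]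

@[simp] lemma mem_Tins {S : Finset (Fin m)} {q : Fin m} :
    Fin.castSucc q ∈ Tins S ↔ q ∈ S := by
  rw [← Fin.succAbove_last_apply]
  simp only [Tins, Finset.mem_insert, succAbove_mem_map]
  rw [Fin.succAbove_last_apply]
  simp [(Fin.castSucc_lt_last q).ne]

@[simp] lemma last_mem_Tins {S : Finset (Fin m)} : Fin.last m ∈ Tins S := by
  simp [Tins]

@[simp] lemma castSucc_mem_map_last {S : Finset (Fin m)} {q : Fin m} :
    Fin.castSucc q ∈ S.map (Fin.last m).succAboveEmb ↔ q ∈ S := by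
  rw [← Fin.succAbove_last_apply]; exact succAbove_mem_map

lemma markedOK_B (k : ℕ) :
    markedOK (mk (Fin.last m) (Fin.last m) π) (Tins S) (k + 1) ↔ markedOK π S k := by
  unfold markedOK
  have hcard : (Tins S).card = S.card + 1 := by
    rw [Tins, Finset.card_insert_of_notMem self_not_mem_map, Finset.card_map]
  constructor
  · rintro ⟨h1, h2⟩
    refine ⟨by omega, fun a ha b hb hab => ?_⟩
    have := h2 _ (mem_Tins.2 ha) _ (mem_Tins.2 hb) (Fin.castSucc_lt_castSucc_iff.2 hab)
    simpa [Fin.succAbove_lt_succAbove_iff] using this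
  · rintro ⟨h1, h2⟩
    refine ⟨by omega, fun a ha b hb hab => ?_⟩
    rcases Finset.mem_insert.1 ha with rfl | ha'
    · exact absurd (lt_of_lt_of_le hab (Fin.le_last b)) (lt_irrefl _)
    obtain ⟨a', ha2, rfl⟩ := Finset.mem_map.1 ha'
    rw [show ((Fin.last m).succAboveEmb a' : Fin (m + 1)) = Fin.castSucc a' by
      simp [Fin.succAboveEmb]] at *
    rcases Finset.mem_insert.1 hb with rfl | hb'
    · simp only [mk_at, mk_last_castSucc]
      simpa using Fin.castSucc_lt_last (π a')
    obtain ⟨b', hb2, rfl⟩ := Finset.mem_map.1 hb'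
    rw [show ((Fin.last m).succAboveEmb b' : Fin (m + 1)) = Fin.castSucc b' by
      simp [Fin.succAboveEmb]] at *
    have := h2 a' ha2 b' hb2 (Fin.castSucc_lt_castSucc_iff.1 hab)
    simpa [Fin.succAbove_lt_succAbove_iff] using this

lemma RLP_B_castSucc (q : Fin m) :
    RLP (mk (Fin.last m) (Fin.last m) π) (Tins S) (Fin.castSucc q) ↔ RLP π S q := by
  unfold RLP
  constructor
  · rintro ⟨h1, h2, h3, h4⟩
    refine ⟨fun hq => h1 (mem_Tins.2 hq), fun s hs hlt => ?_, fun s hs hlt => ?_,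
      fun q' hlt hq' hgap => ?_⟩
    · have := h2 _ (mem_Tins.2 hs) (Fin.castSucc_lt_castSucc_iff.2 hlt)
      simpa [Fin.succAbove_lt_succAbove_iff] using this
    · have := h3 _ (mem_Tins.2 hs) (Fin.castSucc_lt_castSucc_iff.2 hlt)
      simpa [Fin.succAbove_lt_succAbove_iff] using this
    · have := h4 (Fin.castSucc q') (Fin.castSucc_lt_castSucc_iff.2 hlt)
        (fun h => hq' (mem_Tins.1 h)) ?_
      · simpa [Fin.succAbove_lt_succAbove_iff] using this
      intro r hr1 hr2
      have hrne : r ≠ Fin.last m := Fin.ne_last_of_lt (lt_trans hr2 (Fin.castSucc_lt_last q'))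
      obtain ⟨r', rfl⟩ := Fin.exists_castSucc_eq.2 hrne
      rw [mem_Tins]
      exact hgap r' (Fin.castSucc_lt_castSucc_iff.1 hr1) (Fin.castSucc_lt_castSucc_iff.1 hr2)
  · rintro ⟨h1, h2, h3, h4⟩
    refine ⟨fun hq => h1 (mem_Tins.1 hq), ?_, ?_, ?_⟩
    · intro s hs hlt
      rcases Finset.mem_insert.1 hs with rfl | hs'
      · exact absurd (lt_trans hlt (Fin.castSucc_lt_last q)) (lt_irrefl _)
      have hsne : s ≠ Fin.last m := Fin.ne_last_of_lt (lt_trans hlt (Fin.castSucc_lt_last q))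
      obtain ⟨s', rfl⟩ := Fin.exists_castSucc_eq.2 hsne
      have := h2 s' (by simpa using hs') (Fin.castSucc_lt_castSucc_iff.1 hlt)
      simpa [Fin.succAbove_lt_succAbove_iff] using this
    · intro s hs hlt
      rcases Finset.mem_insert.1 hs with rfl | hs'
      · simp only [mk_at, mk_last_castSucc]
        simpa using Fin.castSucc_lt_last (π q)
      obtain ⟨s', hs2, rfl⟩ := Finset.mem_map.1 hs'
      rw [show ((Fin.last m).succAboveEmb s' : Fin (m + 1)) = Fin.castSucc s' by
        simp [Fin.succAboveEmb]] at *
      have := h3 s' hs2 (Fin.castSucc_lt_castSucc_iff.1 hlt)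
      simpa [Fin.succAbove_lt_succAbove_iff] using this
    · intro q' hlt hq' hgap
      have hq'ne : q' ≠ Fin.last m := fun h => hq' (h ▸ last_mem_Tins)
      obtain ⟨q'', rfl⟩ := Fin.exists_castSucc_eq.2 hq'ne
      have := h4 q'' (Fin.castSucc_lt_castSucc_iff.1 hlt) (fun h => hq' (mem_Tins.2 h)) ?_
      · simpa [Fin.succAbove_lt_succAbove_iff] using this
      intro r hr1 hr2
      have := hgap (Fin.castSucc r) (Fin.castSucc_lt_castSucc_iff.2 hr1)
        (Fin.castSucc_lt_castSucc_iff.2 hr2)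
      exact fun hrS => this (mem_Tins.2 hrS)

lemma LRP_B_castSucc (q : Fin m) :
    LRP (mk (Fin.last m) (Fin.last m) π) (Tins S) (Fin.castSucc q) ↔ LRP π S q := by
  unfold LRP
  constructor
  · rintro ⟨h1, ⟨s, hs, hslt⟩, h3⟩
    have hsne : s ≠ Fin.last m := Fin.ne_last_of_lt (lt_trans hslt (Fin.castSucc_lt_last q))
    obtain ⟨s', rfl⟩ := Fin.exists_castSucc_eq.2 hsne
    refine ⟨fun hq => h1 (mem_Tins.2 hq),
      ⟨s', mem_Tins.1 hs, Fin.castSucc_lt_castSucc_iff.1 hslt⟩, ?_⟩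
    intro q' hlt
    have := h3 (Fin.castSucc q') (Fin.castSucc_lt_castSucc_iff.2 hlt)
    simpa [Fin.succAbove_lt_succAbove_iff] using this
  · rintro ⟨h1, ⟨s, hs, hslt⟩, h3⟩
    refine ⟨fun hq => h1 (mem_Tins.1 hq),
      ⟨Fin.castSucc s, mem_Tins.2 hs, Fin.castSucc_lt_castSucc_iff.2 hslt⟩, ?_⟩
    intro q' hlt
    have hq'ne : q' ≠ Fin.last m :=
      Fin.ne_last_of_lt (lt_trans hlt (Fin.castSucc_lt_last q))
    obtain ⟨q'', rfl⟩ := Fin.exists_castSucc_eq.2 hq'ne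
    have := h3 q'' (Fin.castSucc_lt_castSucc_iff.1 hlt)
    simpa [Fin.succAbove_lt_succAbove_iff] using this

open Classical in
lemma rlmin'_B :
    rlmin' (mk (Fin.last m) (Fin.last m) π) (Tins S) = rlmin' π S := by
  rw [rlmin'_eq, rlmin'_eq, card_filter_split (Fin.last m)]
  rw [if_neg (fun h => (h.1 : _ ∉ Tins S) last_mem_Tins), add_zero]
  congr 1
  apply Finset.filter_congr
  intro q _
  rw [Fin.succAbove_last_apply]
  simp [RLP_B_castSucc]

open Classical in
lemma lrmin'_B :
    lrmin' (mk (Fin.last m) (Fin.last m) π) (Tins S) = lrmin' π S := by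
  rw [lrmin'_eq, lrmin'_eq, card_filter_split (Fin.last m)]
  rw [if_neg (fun h => (h.1 : _ ∉ Tins S) last_mem_Tins), add_zero]
  congr 1
  apply Finset.filter_congr
  intro q _
  rw [Fin.succAbove_last_apply]
  simp [LRP_B_castSucc]

end CaseB

section CaseC

variable {n : ℕ} (c : Fin (n + 1)) (π : Equiv.Perm (Fin (n + 1))) (S : Finset (Fin (n + 1)))

lemma castSucc_succAbove_top : (Fin.castSucc c).succAbove (Fin.last n) = Fin.last (n + 1) := by
  rw [Fin.succAbove_of_le_castSucc _ _ (Fin.castSucc_le_castSucc_iff.2 (Fin.le_last c)),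
    Fin.succ_last]

lemma mkC_symm_top :
    (mk (Fin.last (n + 1)) (Fin.castSucc c) π).symm (Fin.last (n + 1))
      = Fin.castSucc (π.symm (Fin.last n)) := by
  rw [Equiv.symm_apply_eq, mk_last_castSucc, Equiv.apply_symm_apply, castSucc_succAbove_top]

variable (hmax : π.symm (Fin.last n) ∈ S)

include hmax

lemma RLP_C_at : ¬ RLP (mk (Fin.last (n + 1)) (Fin.castSucc c) π)
    (S.map (Fin.last (n + 1)).succAboveEmb) (Fin.last (n + 1)) := by
  rintro ⟨h1, h2, h3, h4⟩
  have hm : Fin.castSucc (π.symm (Fin.last n)) ∈ S.map (Fin.last (n + 1)).succAboveEmb :=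
    castSucc_mem_map_last.2 hmax
  have := h2 _ hm (Fin.castSucc_lt_last _)
  simp only [mk_at, mk_last_castSucc, Equiv.apply_symm_apply, castSucc_succAbove_top] at this
  exact absurd this (Fin.not_lt.2 (Fin.le_last _))

lemma RLP_C_castSucc (q : Fin (n + 1)) :
    RLP (mk (Fin.last (n + 1)) (Fin.castSucc c) π)
      (S.map (Fin.last (n + 1)).succAboveEmb) (Fin.castSucc q) ↔ RLP π S q := by
  unfold RLP
  constructor
  · rintro ⟨h1, h2, h3, h4⟩
    refine ⟨fun hq => h1 (castSucc_mem_map_last.2 hq), fun s hs hlt => ?_, fun s hs hlt => ?_,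
      fun q' hlt hq' hgap => ?_⟩
    · have := h2 _ (castSucc_mem_map_last.2 hs) (Fin.castSucc_lt_castSucc_iff.2 hlt)
      simpa [Fin.succAbove_lt_succAbove_iff] using this
    · have := h3 _ (castSucc_mem_map_last.2 hs) (Fin.castSucc_lt_castSucc_iff.2 hlt)
      simpa [Fin.succAbove_lt_succAbove_iff] using this
    · have := h4 (Fin.castSucc q') (Fin.castSucc_lt_castSucc_iff.2 hlt)
        (fun h => hq' (castSucc_mem_map_last.1 h)) ?_
      · simpa [Fin.succAbove_lt_succAbove_iff] using this
      intro r hr1 hr2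
      have hrne : r ≠ Fin.last (n + 1) :=
        Fin.ne_last_of_lt (lt_trans hr2 (Fin.castSucc_lt_last q'))
      obtain ⟨r', rfl⟩ := Fin.exists_castSucc_eq.2 hrne
      rw [castSucc_mem_map_last]
      exact hgap r' (Fin.castSucc_lt_castSucc_iff.1 hr1) (Fin.castSucc_lt_castSucc_iff.1 hr2)
  · rintro ⟨h1, h2, h3, h4⟩
    refine ⟨fun hq => h1 (castSucc_mem_map_last.1 hq), ?_, ?_, ?_⟩
    · intro s hs hlt
      have hsne : s ≠ Fin.last (n + 1) :=
        Fin.ne_last_of_lt (lt_trans hlt (Fin.castSucc_lt_last q))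
      obtain ⟨s', rfl⟩ := Fin.exists_castSucc_eq.2 hsne
      have := h2 s' (castSucc_mem_map_last.1 hs) (Fin.castSucc_lt_castSucc_iff.1 hlt)
      simpa [Fin.succAbove_lt_succAbove_iff] using this
    · intro s hs hlt
      have hsne : s ≠ Fin.last (n + 1) := fun h => self_not_mem_map (h ▸ hs)
      obtain ⟨s', rfl⟩ := Fin.exists_castSucc_eq.2 hsne
      have := h3 s' (castSucc_mem_map_last.1 hs) (Fin.castSucc_lt_castSucc_iff.1 hlt)
      simpa [Fin.succAbove_lt_succAbove_iff] using this
    · intro q' hlt hq' hgap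
      rcases eq_or_ne q' (Fin.last (n + 1)) with rfl | hq'ne
      · -- impossible: the gap would have to avoid the marked maximum
        exfalso
        set s' : Fin (n + 1) := π.symm (Fin.last n) with hs'
        rcases lt_trichotomy s' q with hlt' | heq | hgt
        · have := h2 s' hmax hlt'
          rw [hs'] at this
          simp only [Equiv.apply_symm_apply] at this
          exact absurd this (Fin.not_lt.2 (Fin.le_last _))
        · exact h1 (heq ▸ hmax)
        · exact hgap (Fin.castSucc s') (Fin.castSucc_lt_castSucc_iff.2 hgt)
            (Fin.castSucc_lt_last s') (castSucc_mem_map_last.2 hmax)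
      · obtain ⟨q'', rfl⟩ := Fin.exists_castSucc_eq.2 hq'ne
        have := h4 q'' (Fin.castSucc_lt_castSucc_iff.1 hlt)
          (fun h => hq' (castSucc_mem_map_last.2 h)) ?_
        · simpa [Fin.succAbove_lt_succAbove_iff] using this
        intro r hr1 hr2
        have := hgap (Fin.castSucc r) (Fin.castSucc_lt_castSucc_iff.2 hr1)
          (Fin.castSucc_lt_castSucc_iff.2 hr2)
        exact fun hrS => this (castSucc_mem_map_last.2 hrS)

omit hmax in
lemma LRP_C_castSucc (q : Fin (n + 1)) :
    LRP (mk (Fin.last (n + 1)) (Fin.castSucc c) π)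
      (S.map (Fin.last (n + 1)).succAboveEmb) (Fin.castSucc q) ↔ LRP π S q := by
  unfold LRP
  constructor
  · rintro ⟨h1, ⟨s, hs, hslt⟩, h3⟩
    have hsne : s ≠ Fin.last (n + 1) :=
      Fin.ne_last_of_lt (lt_trans hslt (Fin.castSucc_lt_last q))
    obtain ⟨s', rfl⟩ := Fin.exists_castSucc_eq.2 hsne
    refine ⟨fun hq => h1 (castSucc_mem_map_last.2 hq),
      ⟨s', castSucc_mem_map_last.1 hs, Fin.castSucc_lt_castSucc_iff.1 hslt⟩, ?_⟩
    intro q' hlt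
    have := h3 (Fin.castSucc q') (Fin.castSucc_lt_castSucc_iff.2 hlt)
    simpa [Fin.succAbove_lt_succAbove_iff] using this
  · rintro ⟨h1, ⟨s, hs, hslt⟩, h3⟩
    refine ⟨fun hq => h1 (castSucc_mem_map_last.1 hq),
      ⟨Fin.castSucc s, castSucc_mem_map_last.2 hs, Fin.castSucc_lt_castSucc_iff.2 hslt⟩, ?_⟩
    intro q' hlt
    have hq'ne : q' ≠ Fin.last (n + 1) :=
      Fin.ne_last_of_lt (lt_trans hlt (Fin.castSucc_lt_last q))
    obtain ⟨q'', rfl⟩ := Fin.exists_castSucc_eq.2 hq'ne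
    have := h3 q'' (Fin.castSucc_lt_castSucc_iff.1 hlt)
    simpa [Fin.succAbove_lt_succAbove_iff] using this

lemma LRP_C_at :
    LRP (mk (Fin.last (n + 1)) (Fin.castSucc c) π)
      (S.map (Fin.last (n + 1)).succAboveEmb) (Fin.last (n + 1)) ↔ c = 0 := by
  unfold LRP
  constructor
  · rintro ⟨h1, h2, h3⟩
    have := h3 (Fin.castSucc (π.symm 0)) (Fin.castSucc_lt_last _)
    simp only [mk_at, mk_last_castSucc, Equiv.apply_symm_apply] at this
    rw [Fin.lt_succAbove_iff_le_castSucc, Fin.castSucc_le_castSucc_iff, Fin.le_zero_iff] at this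
    exact this
  · rintro rfl
    refine ⟨self_not_mem_map, ⟨_, castSucc_mem_map_last.2 hmax, Fin.castSucc_lt_last _⟩, ?_⟩
    intro q' hlt
    have hq'ne : q' ≠ Fin.last (n + 1) := Fin.ne_last_of_lt hlt
    obtain ⟨q'', rfl⟩ := Fin.exists_castSucc_eq.2 hq'ne
    simp only [mk_at, mk_last_castSucc]
    rw [Fin.lt_succAbove_iff_le_castSucc, Fin.castSucc_le_castSucc_iff]
    exact Fin.zero_le _

open Classical in
lemma rlmin'_C :
    rlmin' (mk (Fin.last (n + 1)) (Fin.castSucc c) π)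
      (S.map (Fin.last (n + 1)).succAboveEmb) = rlmin' π S := by
  rw [rlmin'_eq, rlmin'_eq, card_filter_split (Fin.last (n + 1))]
  rw [if_neg (RLP_C_at c π S hmax), add_zero]
  congr 1
  apply Finset.filter_congr
  intro q _
  rw [Fin.succAbove_last_apply]
  simp [RLP_C_castSucc c π S hmax]

open Classical in
lemma lrmin'_C :
    lrmin' (mk (Fin.last (n + 1)) (Fin.castSucc c) π)
      (S.map (Fin.last (n + 1)).succAboveEmb)
      = lrmin' π S + (if c = 0 then 1 else 0) := by
  rw [lrmin'_eq, lrmin'_eq, card_filter_split (Fin.last (n + 1))]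
  congr 1
  · congr 1
    apply Finset.filter_congr
    intro q _
    rw [Fin.succAbove_last_apply]
    simp [LRP_C_castSucc c π S]
  · simp only [LRP_C_at c π S hmax]

end CaseC

section Equivs

open Classical

@[simp] lemma mk_symm_at (j v : Fin (m + 1)) (π : Equiv.Perm (Fin m)) :
    (mk j v π).symm v = j := by
  rw [Equiv.symm_apply_eq, mk_at]

@[simp] lemma mk_symm_succAbove (j v : Fin (m + 1)) (π : Equiv.Perm (Fin m)) (w : Fin m) :
    (mk j v π).symm (v.succAbove w) = j.succAbove (π.symm w) := by
  rw [Equiv.symm_apply_eq, mk_succAbove, Equiv.apply_symm_apply]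

/-- Remove the mark set along position `j`. -/
def unmapS (j : Fin (m + 1)) (T : Finset (Fin (m + 1))) : Finset (Fin m) :=
  univ.filter fun q => j.succAbove q ∈ T

@[simp] lemma unmapS_map (j : Fin (m + 1)) (S : Finset (Fin m)) :
    unmapS j (S.map j.succAboveEmb) = S := by
  ext q; simp [unmapS, Fin.succAbove_right_inj]

lemma map_unmapS (j : Fin (m + 1)) (T : Finset (Fin (m + 1))) :
    (unmapS j T).map j.succAboveEmb = T.erase j := by
  ext p
  simp only [Finset.mem_map, Finset.mem_erase, unmapS, Finset.mem_filter, Finset.mem_univ,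
    true_and, Fin.succAboveEmb, Function.Embedding.coeFn_mk]
  constructor
  · rintro ⟨q, hq, rfl⟩
    exact ⟨Fin.succAbove_ne j q, hq⟩
  · rintro ⟨hne, hp⟩
    obtain ⟨q, rfl⟩ := Fin.exists_succAbove_eq hne
    exact ⟨q, hp, rfl⟩

/-- Decomposition of a marked permutation of `Fin (m+1)` by the position of the
maximum value: the max sits at position `j`, is marked iff `b`. -/
def decompMax : ((Fin (m + 1) × Equiv.Perm (Fin m)) × (Bool × Finset (Fin m)))
    ≃ (Equiv.Perm (Fin (m + 1)) × Finset (Fin (m + 1))) where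
  toFun x := (mk x.1.1 (Fin.last m) x.1.2,
    if x.2.1 then insert x.1.1 (x.2.2.map x.1.1.succAboveEmb)
      else x.2.2.map x.1.1.succAboveEmb)
  invFun y := ((y.1.symm (Fin.last m), unmk (y.1.symm (Fin.last m)) y.1),
    (decide (y.1.symm (Fin.last m) ∈ y.2), unmapS (y.1.symm (Fin.last m)) y.2))
  left_inv := by
    rintro ⟨⟨j, π⟩, b, S⟩
    refine Prod.ext (Prod.ext ?_ ?_) (Prod.ext ?_ ?_) <;>
      simp only [mk_symm_at, unmk_mk]
    · cases b
      · simpa using fun x _ => Fin.succAbove_ne j x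
      · simp
    · cases b
      · simpa using unmapS_map j S
      · simp only [if_true]
        ext q
        simp [unmapS, Fin.succAbove_ne j q, Fin.succAbove_right_inj]
  right_inv := by
    rintro ⟨σ, T⟩
    have h1 : mk (σ.symm (Fin.last m)) (Fin.last m) (unmk (σ.symm (Fin.last m)) σ) = σ := by
      have := mk_unmk (σ.symm (Fin.last m)) σ
      rwa [Equiv.apply_symm_apply] at this
    refine Prod.ext h1 ?_
    simp only [decide_eq_true_eq]
    by_cases hb : σ.symm (Fin.last m) ∈ T
    · rw [if_pos hb, map_unmapS, Finset.insert_erase hb]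
    · rw [if_neg hb, map_unmapS, Finset.erase_eq_of_notMem hb]

/-- Decomposition of a marked permutation of `Fin (m+1)` by the last position:
the last position holds value `v`, is marked iff `b`. -/
def decompLast : ((Fin (m + 1) × Equiv.Perm (Fin m)) × (Bool × Finset (Fin m)))
    ≃ (Equiv.Perm (Fin (m + 1)) × Finset (Fin (m + 1))) where
  toFun x := (mk (Fin.last m) x.1.1 x.1.2,
    if x.2.1 then insert (Fin.last m) (x.2.2.map (Fin.last m).succAboveEmb)
      else x.2.2.map (Fin.last m).succAboveEmb)
  invFun y := ((y.1 (Fin.last m), unmk (Fin.last m) y.1),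
    (decide (Fin.last m ∈ y.2), unmapS (Fin.last m) y.2))
  left_inv := by
    rintro ⟨⟨v, π⟩, b, S⟩
    refine Prod.ext (Prod.ext ?_ ?_) (Prod.ext ?_ ?_) <;>
      simp only [mk_at, unmk_mk]
    · cases b
      · simpa using fun x _ => Fin.succAbove_ne (Fin.last m) x
      · simp
    · cases b
      · simpa using unmapS_map (Fin.last m) S
      · simp only [if_true]
        ext q
        simp [unmapS, Fin.succAbove_ne (Fin.last m) q, Fin.succAbove_right_inj,
          (Fin.castSucc_lt_last q).ne]
  right_inv := by
    rintro ⟨τ, T⟩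
    refine Prod.ext (mk_unmk (Fin.last m) τ) ?_
    simp only [decide_eq_true_eq]
    by_cases hb : Fin.last m ∈ T
    · rw [if_pos hb, map_unmapS, Finset.insert_erase hb]
    · rw [if_neg hb, map_unmapS, Finset.erase_eq_of_notMem hb]

end Equivs

section Sums

open Classical

variable {R : Type} [CommRing R]

/-- The weight of a marked permutation. -/
noncomputable def wgt (X Y : R) {N : ℕ} (σ : Equiv.Perm (Fin N)) (S : Finset (Fin N)) : R :=
  X ^ rlmin' σ S * Y ^ lrmin' σ S

/-- The generating function for `k`-marked permutations of `[n]`. -/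
noncomputable def Fs (X Y : R) (n k : ℕ) : R :=
  ∑ σ : Equiv.Perm (Fin n), ∑ S : Finset (Fin n),
    if markedOK σ S k then wgt X Y σ S else 0

/-- The generating function for `(k+1)`-marked permutations of `[n+1]` with marked maximum. -/
noncomputable def Gs (X Y : R) (n k : ℕ) : R :=
  ∑ σ : Equiv.Perm (Fin (n + 1)), ∑ S : Finset (Fin (n + 1)),
    if markedOK σ S (k + 1) ∧ σ.symm (Fin.last n) ∈ S then wgt X Y σ S else 0

variable (X Y : R)

lemma sum_ite_coeff (n : ℕ) :
    ∑ j : Fin (n + 1), (if j = Fin.last n then X else 1) = (n : R) + X := by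
  rw [Fin.sum_univ_castSucc]
  simp [(Fin.castSucc_lt_last _).ne]

lemma Bpart (n k : ℕ) :
    (∑ σ : Equiv.Perm (Fin (n + 1)), ∑ T : Finset (Fin (n + 1)),
        if markedOK σ T k ∧ σ.symm (Fin.last n) ∉ T then wgt X Y σ T else 0)
      = ((n : R) + X) * Fs X Y n k := by
  have h1 : (∑ σ : Equiv.Perm (Fin (n + 1)), ∑ T : Finset (Fin (n + 1)),
        if markedOK σ T k ∧ σ.symm (Fin.last n) ∉ T then wgt X Y σ T else 0)
      = ∑ y : (Fin (n + 1) × Equiv.Perm (Fin n)) × (Bool × Finset (Fin n)),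
          (fun x : Equiv.Perm (Fin (n + 1)) × Finset (Fin (n + 1)) =>
            if markedOK x.1 x.2 k ∧ x.1.symm (Fin.last n) ∉ x.2 then wgt X Y x.1 x.2 else 0)
            (decompMax y) := by
    refine Eq.trans ?_ (Equiv.sum_comp decompMax
      (fun x : Equiv.Perm (Fin (n + 1)) × Finset (Fin (n + 1)) =>
        if markedOK x.1 x.2 k ∧ x.1.symm (Fin.last n) ∉ x.2 then wgt X Y x.1 x.2 else 0)).symm
    exact (Fintype.sum_prod_type
      (fun x : Equiv.Perm (Fin (n + 1)) × Finset (Fin (n + 1)) =>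
        if markedOK x.1 x.2 k ∧ x.1.symm (Fin.last n) ∉ x.2 then wgt X Y x.1 x.2 else 0)).symm
  rw [h1]
  rw [Fintype.sum_prod_type]
  have h2 : ∀ (j : Fin (n + 1)) (π : Equiv.Perm (Fin n)),
      (∑ z : Bool × Finset (Fin n),
        (fun x : Equiv.Perm (Fin (n + 1)) × Finset (Fin (n + 1)) =>
          if markedOK x.1 x.2 k ∧ x.1.symm (Fin.last n) ∉ x.2 then wgt X Y x.1 x.2 else 0)
          (decompMax ((j, π), z)))
      = ∑ S : Finset (Fin n),
          if markedOK π S k then (if j = Fin.last n then X else 1) * wgt X Y π S else 0 := by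
    intro j π
    rw [Fintype.sum_prod_type, Fintype.sum_bool]
    have hz : (∑ S : Finset (Fin n),
        (fun x : Equiv.Perm (Fin (n + 1)) × Finset (Fin (n + 1)) =>
          if markedOK x.1 x.2 k ∧ x.1.symm (Fin.last n) ∉ x.2 then wgt X Y x.1 x.2 else 0)
          (decompMax ((j, π), (true, S)))) = 0 := by
      apply Finset.sum_eq_zero
      intro S _
      simp only [decompMax, Equiv.coe_fn_mk, if_true, mk_symm_at]
      rw [if_neg]
      rintro ⟨-, h⟩
      exact h (Finset.mem_insert_self j _)
    rw [hz, zero_add]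
    apply Finset.sum_congr rfl
    intro S _
    simp only [decompMax, Equiv.coe_fn_mk, Bool.false_eq_true, if_false, mk_symm_at]
    rw [if_congr (show (markedOK (mk j (Fin.last n) π) (S.map j.succAboveEmb) k ∧
        j ∉ S.map j.succAboveEmb) ↔ markedOK π S k from
      ⟨fun h => (markedOK_A j π S k _).1 h.1,
       fun h => ⟨(markedOK_A j π S k _).2 h, self_not_mem_map⟩⟩) rfl rfl]
    rcases Classical.em (markedOK π S k) with h | h
    · rw [if_pos h, if_pos h]
      unfold wgt
      rw [rlmin'_A, lrmin'_A, pow_add]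
      rcases Classical.em (j = Fin.last n) with hj | hj
      · rw [if_pos hj, if_pos hj, pow_one]; ring
      · rw [if_neg hj, if_neg hj, pow_zero]; ring
    · rw [if_neg h, if_neg h]
  calc ∑ jπ : Fin (n + 1) × Equiv.Perm (Fin n), _
      = ∑ j : Fin (n + 1), ∑ π : Equiv.Perm (Fin n), ∑ S : Finset (Fin n),
          if markedOK π S k then (if j = Fin.last n then X else 1) * wgt X Y π S else 0 := by
        rw [Fintype.sum_prod_type]
        exact Finset.sum_congr rfl fun j _ => Finset.sum_congr rfl fun π _ => h2 j π
    _ = ∑ j : Fin (n + 1), (if j = Fin.last n then X else 1) * Fs X Y n k := by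
        apply Finset.sum_congr rfl
        intro j _
        rw [Fs, Finset.mul_sum]
        apply Finset.sum_congr rfl
        intro π _
        rw [Finset.mul_sum]
        apply Finset.sum_congr rfl
        intro S _
        rcases Classical.em (markedOK π S k) with h | h
        · rw [if_pos h, if_pos h]
        · rw [if_neg h, if_neg h, mul_zero]
    _ = ((n : R) + X) * Fs X Y n k := by
        rw [← Finset.sum_mul, sum_ite_coeff]

lemma ite_split (P Q : Prop) (w : R) :
    (if P then w else 0) = (if P ∧ Q then w else 0) + (if P ∧ ¬Q then w else 0) := by
  rcases Classical.em P with h | h <;> rcases Classical.em Q with h' | h' <;> simp [h, h']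

/-- Recursion for `Fs` in the positive-`k` case. -/
lemma Fs_rec (n k : ℕ) :
    Fs X Y (n + 1) (k + 1) = Gs X Y n k + ((n : R) + X) * Fs X Y n (k + 1) := by
  rw [← Bpart X Y n (k + 1), Fs, Gs]
  rw [← Finset.sum_add_distrib]
  apply Finset.sum_congr rfl
  intro σ _
  rw [← Finset.sum_add_distrib]
  apply Finset.sum_congr rfl
  intro T _
  rcases Classical.em (markedOK σ T (k + 1)) with h | h <;>
    rcases Classical.em (σ.symm (Fin.last n) ∈ T) with h' | h' <;>
    simp [h, h']

/-- Recursion for `Fs` in the `k = 0` case. -/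
lemma Fs_rec0 (n : ℕ) :
    Fs X Y (n + 1) 0 = ((n : R) + X) * Fs X Y n 0 := by
  rw [← Bpart X Y n 0, Fs]
  apply Finset.sum_congr rfl
  intro σ _
  apply Finset.sum_congr rfl
  intro T _
  rcases Classical.em (markedOK σ T 0) with h | h
  · have hT : T = ∅ := Finset.card_eq_zero.1 h.1
    rw [if_pos h, if_pos ⟨h, by simp [hT]⟩]
  · rw [if_neg h, if_neg (fun hc => h hc.1)]

lemma markedOK_last_eq {M : ℕ} (σ : Equiv.Perm (Fin (M + 1))) (T : Finset (Fin (M + 1)))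
    (k' : ℕ) (hm : markedOK σ T k') (hsym : σ.symm (Fin.last M) ∈ T)
    (hlast : Fin.last M ∈ T) : σ (Fin.last M) = Fin.last M := by
  rcases eq_or_ne (σ.symm (Fin.last M)) (Fin.last M) with h | h
  · have := Equiv.apply_symm_apply σ (Fin.last M)
    rw [h] at this
    exact this
  · have hlt : σ.symm (Fin.last M) < Fin.last M := Fin.lt_last_iff_ne_last.2 h
    have := hm.2 _ hsym _ hlast hlt
    rw [Equiv.apply_symm_apply] at this
    exact absurd this (Fin.not_lt.2 (Fin.le_last _))

lemma sum_ite_coeffY (n : ℕ) :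
    ∑ c : Fin (n + 1), (if c = 0 then Y else 1) = (n : R) + Y := by
  rw [Fin.sum_univ_succ]
  simp [Fin.succ_ne_zero, add_comm]

/-- Recursion for `Gs`. -/
lemma Gs_rec (n k : ℕ) :
    Gs X Y (n + 1) k = Fs X Y (n + 1) k + ((n : R) + Y) * Gs X Y n k := by
  have h1 : Gs X Y (n + 1) k
      = ∑ y : (Fin (n + 2) × Equiv.Perm (Fin (n + 1))) × (Bool × Finset (Fin (n + 1))),
          (fun x : Equiv.Perm (Fin (n + 2)) × Finset (Fin (n + 2)) =>
            if markedOK x.1 x.2 (k + 1) ∧ x.1.symm (Fin.last (n + 1)) ∈ x.2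
            then wgt X Y x.1 x.2 else 0) (decompLast y) := by
    refine Eq.trans ?_ (Equiv.sum_comp decompLast
      (fun x : Equiv.Perm (Fin (n + 2)) × Finset (Fin (n + 2)) =>
        if markedOK x.1 x.2 (k + 1) ∧ x.1.symm (Fin.last (n + 1)) ∈ x.2
        then wgt X Y x.1 x.2 else 0)).symm
    exact (Fintype.sum_prod_type
      (fun x : Equiv.Perm (Fin (n + 2)) × Finset (Fin (n + 2)) =>
        if markedOK x.1 x.2 (k + 1) ∧ x.1.symm (Fin.last (n + 1)) ∈ x.2
        then wgt X Y x.1 x.2 else 0)).symm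
  rw [h1, Fintype.sum_prod_type]
  have h2 : ∀ (v : Fin (n + 2)) (π : Equiv.Perm (Fin (n + 1))),
      (∑ z : Bool × Finset (Fin (n + 1)),
        (fun x : Equiv.Perm (Fin (n + 2)) × Finset (Fin (n + 2)) =>
          if markedOK x.1 x.2 (k + 1) ∧ x.1.symm (Fin.last (n + 1)) ∈ x.2
          then wgt X Y x.1 x.2 else 0) (decompLast ((v, π), z)))
      = (∑ S : Finset (Fin (n + 1)),
          if v = Fin.last (n + 1) ∧ markedOK π S k then wgt X Y π S else 0)
        + ∑ S : Finset (Fin (n + 1)),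
            (fun x : Equiv.Perm (Fin (n + 2)) × Finset (Fin (n + 2)) =>
              if markedOK x.1 x.2 (k + 1) ∧ x.1.symm (Fin.last (n + 1)) ∈ x.2
              then wgt X Y x.1 x.2 else 0) (mk (Fin.last (n + 1)) v π,
                S.map (Fin.last (n + 1)).succAboveEmb) := by
    intro v π
    rw [Fintype.sum_prod_type, Fintype.sum_bool]
    congr 1
    -- the `b = true` (last position marked) part
    apply Finset.sum_congr rfl
    intro S _
    simp only [decompLast, Equiv.coe_fn_mk, if_true]
    rcases eq_or_ne v (Fin.last (n + 1)) with rfl | hv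
    · have hiff : (markedOK (mk (Fin.last (n + 1)) (Fin.last (n + 1)) π)
          (insert (Fin.last (n + 1)) (S.map (Fin.last (n + 1)).succAboveEmb)) (k + 1) ∧
          (mk (Fin.last (n + 1)) (Fin.last (n + 1)) π).symm (Fin.last (n + 1)) ∈
            insert (Fin.last (n + 1)) (S.map (Fin.last (n + 1)).succAboveEmb))
          ↔ (Fin.last (n + 1) = Fin.last (n + 1) ∧ markedOK π S k) := by
        constructor
        · rintro ⟨hm, -⟩
          exact ⟨rfl, (markedOK_B π S k).1 (by exact hm)⟩
        · rintro ⟨-, hm⟩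
          exact ⟨(markedOK_B π S k).2 hm, by rw [mk_symm_at]; exact last_mem_Tins⟩
      rw [if_congr hiff rfl rfl]
      rcases Classical.em (markedOK π S k) with h | h
      · have hw : wgt X Y (mk (Fin.last (n + 1)) (Fin.last (n + 1)) π) (Tins S)
            = wgt X Y π S := by
          unfold wgt
          rw [rlmin'_B, lrmin'_B]
        simp only [h, and_true, if_pos rfl]
        exact hw
      · simp [h]
    · rw [if_neg, if_neg (fun hc => hv hc.1)]
      rintro ⟨hm, hsym⟩
      exact hv (by
        have := markedOK_last_eq _ _ _ hm hsym (by exact last_mem_Tins)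
        rwa [mk_at] at this)
  calc ∑ vπ : Fin (n + 2) × Equiv.Perm (Fin (n + 1)), _
      = (∑ vπ : Fin (n + 2) × Equiv.Perm (Fin (n + 1)),
          ∑ S : Finset (Fin (n + 1)),
            if vπ.1 = Fin.last (n + 1) ∧ markedOK vπ.2 S k then wgt X Y vπ.2 S else 0)
        + ∑ vπ : Fin (n + 2) × Equiv.Perm (Fin (n + 1)),
            ∑ S : Finset (Fin (n + 1)),
              (fun x : Equiv.Perm (Fin (n + 2)) × Finset (Fin (n + 2)) =>
                if markedOK x.1 x.2 (k + 1) ∧ x.1.symm (Fin.last (n + 1)) ∈ x.2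
                then wgt X Y x.1 x.2 else 0) (mk (Fin.last (n + 1)) vπ.1 vπ.2,
                  S.map (Fin.last (n + 1)).succAboveEmb) := by
        rw [← Finset.sum_add_distrib]
        exact Finset.sum_congr rfl fun vπ _ => h2 vπ.1 vπ.2
    _ = Fs X Y (n + 1) k + ((n : R) + Y) * Gs X Y n k := by
        congr 1
        -- marked part gives `Fs (n+1) k`
        · rw [Fintype.sum_prod_type, Fin.sum_univ_castSucc]
          have hz : ∀ c : Fin (n + 1), (∑ π : Equiv.Perm (Fin (n + 1)),
              ∑ S : Finset (Fin (n + 1)),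
                if Fin.castSucc c = Fin.last (n + 1) ∧ markedOK π S k
                then wgt X Y π S else 0) = 0 := by
            intro c
            apply Finset.sum_eq_zero; intro π _
            apply Finset.sum_eq_zero; intro S _
            rw [if_neg (fun hc => (Fin.castSucc_lt_last c).ne hc.1)]
          rw [Finset.sum_eq_zero (fun c _ => hz c), zero_add, Fs]
          apply Finset.sum_congr rfl; intro π _
          apply Finset.sum_congr rfl; intro S _
          rw [if_congr (and_iff_right rfl) rfl rfl]
        -- unmarked part gives `(n + Y) * Gs n k`
        · rw [Fintype.sum_prod_type, Fin.sum_univ_castSucc]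
          have hz : (∑ π : Equiv.Perm (Fin (n + 1)), ∑ S : Finset (Fin (n + 1)),
              (fun x : Equiv.Perm (Fin (n + 2)) × Finset (Fin (n + 2)) =>
                if markedOK x.1 x.2 (k + 1) ∧ x.1.symm (Fin.last (n + 1)) ∈ x.2
                then wgt X Y x.1 x.2 else 0) (mk (Fin.last (n + 1)) (Fin.last (n + 1)) π,
                  S.map (Fin.last (n + 1)).succAboveEmb)) = 0 := by
            apply Finset.sum_eq_zero; intro π _
            apply Finset.sum_eq_zero; intro S _
            simp only [mk_symm_at]
            exact if_neg (fun hc => self_not_mem_map hc.2)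
          rw [hz, add_zero]
          have hc : ∀ c : Fin (n + 1), (∑ π : Equiv.Perm (Fin (n + 1)),
              ∑ S : Finset (Fin (n + 1)),
              (fun x : Equiv.Perm (Fin (n + 2)) × Finset (Fin (n + 2)) =>
                if markedOK x.1 x.2 (k + 1) ∧ x.1.symm (Fin.last (n + 1)) ∈ x.2
                then wgt X Y x.1 x.2 else 0) (mk (Fin.last (n + 1)) (Fin.castSucc c) π,
                  S.map (Fin.last (n + 1)).succAboveEmb))
              = (if c = 0 then Y else 1) * Gs X Y n k := by
            intro c
            rw [Gs, Finset.mul_sum]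
            apply Finset.sum_congr rfl; intro π _
            rw [Finset.mul_sum]
            apply Finset.sum_congr rfl; intro S _
            simp only
            have hiff : (markedOK (mk (Fin.last (n + 1)) (Fin.castSucc c) π)
                (S.map (Fin.last (n + 1)).succAboveEmb) (k + 1) ∧
                (mk (Fin.last (n + 1)) (Fin.castSucc c) π).symm (Fin.last (n + 1)) ∈
                  S.map (Fin.last (n + 1)).succAboveEmb)
                ↔ (markedOK π S (k + 1) ∧ π.symm (Fin.last n) ∈ S) := by
              refine and_congr (markedOK_A _ π S _ _) ?_
              rw [mkC_symm_top]
              exact castSucc_mem_map_last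
            rw [if_congr hiff rfl rfl]
            rcases Classical.em (markedOK π S (k + 1) ∧ π.symm (Fin.last n) ∈ S) with h | h
            · rw [if_pos h, if_pos h]
              unfold wgt
              rw [rlmin'_C c π S h.2, lrmin'_C c π S h.2, pow_add]
              rcases Classical.em (c = 0) with h0 | h0
              · rw [if_pos h0, if_pos h0, pow_one]; ring
              · rw [if_neg h0, if_neg h0, pow_zero]; ring
            · rw [if_neg h, if_neg h, mul_zero]
          rw [Finset.sum_congr rfl (fun c _ => hc c), ← Finset.sum_mul, sum_ite_coeffY]

lemma Fs_eq_zero (n k : ℕ) (h : n < k) : Fs X Y n k = 0 := by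
  rw [Fs]
  apply Finset.sum_eq_zero; intro σ _
  apply Finset.sum_eq_zero; intro S _
  rw [if_neg]
  intro hm
  have h1 : S.card = k := hm.1
  have h2 : S.card ≤ n := by simpa using Finset.card_le_univ S
  omega

lemma Gs_eq_zero (n k : ℕ) (h : n < k) : Gs X Y n k = 0 := by
  rw [Gs]
  apply Finset.sum_eq_zero; intro σ _
  apply Finset.sum_eq_zero; intro S _
  rw [if_neg]
  rintro ⟨hm, -⟩
  have h1 : S.card = k + 1 := hm.1
  have h2 : S.card ≤ n + 1 := by simpa using Finset.card_le_univ S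
  omega

lemma Fs_zero : Fs X Y 0 0 = 1 := by
  rw [Fs]
  rw [Fintype.sum_subsingleton _ (1 : Equiv.Perm (Fin 0))]
  rw [Fintype.sum_subsingleton _ (∅ : Finset (Fin 0))]
  rw [if_pos ⟨rfl, fun i hi => absurd hi (by simp)⟩]
  unfold wgt
  have h1 : rlmin' (1 : Equiv.Perm (Fin 0)) ∅ = 0 := by decide
  have h2 : lrmin' (1 : Equiv.Perm (Fin 0)) ∅ = 0 := by decide
  rw [h1, h2, pow_zero, pow_zero, one_mul]

lemma Gs_zero : Gs X Y 0 0 = 1 := by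
  haveI hs : Subsingleton (Fin (0 + 1)) := ⟨fun a b => Fin.ext (by omega)⟩
  rw [Gs]
  rw [Fintype.sum_subsingleton _ (1 : Equiv.Perm (Fin (0 + 1)))]
  have huniv : (univ : Finset (Finset (Fin 1))) = {∅, {0}} := by decide
  rw [huniv, Finset.sum_insert (by decide), Finset.sum_singleton]
  rw [if_neg (by rintro ⟨⟨hc, -⟩, -⟩; simp at hc)]
  rw [if_pos ⟨⟨by decide, fun i hi j hj hij => absurd hij (by
    have : i = j := Subsingleton.elim i j
    simp [this])⟩, by decide⟩]
  unfold wgt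
  have h1 : rlmin' (1 : Equiv.Perm (Fin 1)) {0} = 0 := by decide
  have h2 : lrmin' (1 : Equiv.Perm (Fin 1)) {0} = 0 := by decide
  rw [h1, h2, pow_zero, pow_zero, one_mul, zero_add]

/-- The main induction. -/
theorem mainEO (E O : ℕ → ℕ → R)
    (hE0 : ∀ n k, n < k → E n k = 0) (hO0 : ∀ n k, n < k → O n k = 0)
    (hEd : ∀ n, E n n = 1) (hOd : ∀ n, O n n = 1)
    (hErec0 : ∀ n, E (n + 1) 0 = ((n : R) + X) * E n 0)
    (hErec : ∀ n k, E (n + 1) (k + 1) = O n k + ((n : R) + X) * E n (k + 1))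
    (hOrec : ∀ n k, O (n + 1) k = E (n + 1) k + ((n : R) + Y) * O n k) :
    ∀ n, (∀ k, E n k = Fs X Y n k) ∧ (∀ k, O n k = Gs X Y n k) := by
  intro n
  induction n with
  | zero =>
    constructor
    · intro k
      cases k with
      | zero => rw [hEd 0, Fs_zero]
      | succ k => rw [hE0 0 (k + 1) (Nat.succ_pos k), Fs_eq_zero X Y 0 (k + 1) (Nat.succ_pos k)]
    · intro k
      cases k with
      | zero => rw [hOd 0, Gs_zero]
      | succ k => rw [hO0 0 (k + 1) (Nat.succ_pos k), Gs_eq_zero X Y 0 (k + 1) (Nat.succ_pos k)]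
  | succ n ih =>
    have hFE : ∀ k, E (n + 1) k = Fs X Y (n + 1) k := by
      intro k
      cases k with
      | zero => rw [hErec0 n, ih.1 0, Fs_rec0]
      | succ k => rw [hErec n k, ih.2 k, ih.1 (k + 1), Fs_rec]
    refine ⟨hFE, fun k => ?_⟩
    rw [hOrec n k, hFE k, ih.2 k, Gs_rec]

end Sums

end Stmt11Aux

open Classical in
/-- Proposition 2.6 (the `E` part): `E_{n,k}` is the generating function
`∑ X^{RLmin'(π)} Y^{LRmin'(π)}` over all `k`-marked permutations `π` of `[n]`. -/
theorem stmt11 {R : Type} [CommRing R] (X Y : R) (E O : ℕ → ℕ → R)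
    (hE0 : ∀ n k, n < k → E n k = 0) (hO0 : ∀ n k, n < k → O n k = 0)
    (hEd : ∀ n, E n n = 1) (hOd : ∀ n, O n n = 1)
    (hErec0 : ∀ n, E (n + 1) 0 = ((n : R) + X) * E n 0)
    (hErec : ∀ n k, E (n + 1) (k + 1) = O n k + ((n : R) + X) * E n (k + 1))
    (hOrec : ∀ n k, O (n + 1) k = E (n + 1) k + ((n : R) + Y) * O n k)
    (n k : ℕ) :
    E n k = ∑ σ : Equiv.Perm (Fin n),
      ∑ S ∈ univ.filter (fun S : Finset (Fin n) => markedOK σ S k),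
        X ^ rlmin' σ S * Y ^ lrmin' σ S := by
  obtain ⟨hF, -⟩ := Stmt11Aux.mainEO X Y E O hE0 hO0 hEd hOd hErec0 hErec hOrec n
  rw [hF k, Stmt11Aux.Fs]
  apply Finset.sum_congr rfl
  intro σ _
  rw [Finset.sum_filter]
  apply Finset.sum_congr rfl
  intro S _
  rfl
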